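/- Let d ≥ 1, a > 0 and x, y ∈ ℝ^d. Then ∫_{ℝ^d} CS⁺(t,x) CS⁺(t,y) exp(−a‖t‖²) dt = (π/a)^{d/2} exp(−‖x−y‖²/(4a)). -/

import Mathlib

open MeasureTheory Real

/-- `CS⁺(t,x) = cos(tᵀx) + sin(tᵀx)`. -/
noncomputable def CSplus {d : ℕ} (t x : EuclideanSpace ℝ (Fin d)) : ℝ :=
  Real.cos (inner ℝ t x : ℝ) + Real.sin (inner ℝ t x : ℝ)

lemma gaussian_pt (a : ℝ) (r s : ℝ) :
    Complex.exp (-(a:ℂ) * (r : ℂ) ^ 2 + Complex.I * (s : ℂ))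
      = Complex.ofReal (Real.exp (-a * r ^ 2)) *
          (Real.cos s + Real.sin s * Complex.I) := by
  rw [Complex.exp_add, mul_comm Complex.I, Complex.exp_mul_I]
  rw [show (-(a:ℂ) * (r:ℂ) ^ 2) = ((-a * r ^ 2 : ℝ) : ℂ) by push_cast; ring,
    ← Complex.ofReal_exp, Complex.ofReal_cos, Complex.ofReal_sin]

lemma gaussian_re (a : ℝ) (r s : ℝ) :
    (Complex.exp (-(a:ℂ) * (r : ℂ) ^ 2 + Complex.I * (s : ℂ))).re
      = Real.cos s * Real.exp (-a * r ^ 2) := by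
  rw [gaussian_pt]
  simp only [Complex.add_re, Complex.add_im, Complex.mul_re, Complex.mul_im, Complex.ofReal_re,
    Complex.ofReal_im, Complex.I_re, Complex.I_im]
  ring

lemma gaussian_im (a : ℝ) (r s : ℝ) :
    (Complex.exp (-(a:ℂ) * (r : ℂ) ^ 2 + Complex.I * (s : ℂ))).im
      = Real.sin s * Real.exp (-a * r ^ 2) := by
  rw [gaussian_pt]
  simp only [Complex.add_re, Complex.add_im, Complex.mul_re, Complex.mul_im, Complex.ofReal_re,
    Complex.ofReal_im, Complex.I_re, Complex.I_im]
  ring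

lemma gaussian_key (d : ℕ) (a : ℝ) (ha : 0 < a) (w : EuclideanSpace ℝ (Fin d)) :
    (∫ t : EuclideanSpace ℝ (Fin d), Real.cos (inner ℝ w t : ℝ) * Real.exp (-a * ‖t‖ ^ 2))
      = (π / a) ^ ((d : ℝ) / 2) * Real.exp (-‖w‖ ^ 2 / (4 * a)) ∧
    (∫ t : EuclideanSpace ℝ (Fin d), Real.sin (inner ℝ w t : ℝ) * Real.exp (-a * ‖t‖ ^ 2)) = 0 := by
  have hre : (0:ℝ) < (a : ℂ).re := by simpa using ha
  have hint := GaussianFourier.integrable_cexp_neg_mul_sq_norm_add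
    (V := EuclideanSpace ℝ (Fin d)) hre Complex.I w
  have hval := GaussianFourier.integral_cexp_neg_mul_sq_norm_add
    (V := EuclideanSpace ℝ (Fin d)) hre Complex.I w
  have hfin : Module.finrank ℝ (EuclideanSpace ℝ (Fin d)) = d := finrank_euclideanSpace_fin
  rw [hfin] at hval
  have hrhs : (↑((π / a) ^ ((d : ℝ) / 2) * Real.exp (-‖w‖ ^ 2 / (4 * a))) : ℂ)
      = ((π / a : ℂ)) ^ ((d : ℂ) / 2 : ℂ)
          * Complex.exp (Complex.I ^ 2 * (‖w‖ : ℂ) ^ 2 / (4 * a)) := by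
    rw [Complex.I_sq]
    push_cast [Complex.ofReal_cpow (by positivity : (0:ℝ) ≤ π / a), Complex.ofReal_exp]
    ring_nf
  rw [← hrhs] at hval
  constructor
  · have : (∫ t : EuclideanSpace ℝ (Fin d),
        Real.cos (inner ℝ w t : ℝ) * Real.exp (-a * ‖t‖ ^ 2))
        = ∫ t : EuclideanSpace ℝ (Fin d), RCLike.re
            (Complex.exp (-(a:ℂ) * ‖t‖ ^ 2 + Complex.I * ((inner ℝ w t : ℝ) : ℂ))) := by
      congr 1 with t
      rw [RCLike.re_to_complex, gaussian_re]
    rw [this, integral_re hint, hval]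
    norm_cast
  · have : (∫ t : EuclideanSpace ℝ (Fin d),
        Real.sin (inner ℝ w t : ℝ) * Real.exp (-a * ‖t‖ ^ 2))
        = ∫ t : EuclideanSpace ℝ (Fin d), RCLike.im
            (Complex.exp (-(a:ℂ) * ‖t‖ ^ 2 + Complex.I * ((inner ℝ w t : ℝ) : ℂ))) := by
      congr 1 with t
      rw [RCLike.im_to_complex, gaussian_im]
    rw [this, integral_im hint, hval]
    norm_cast

/-- `∫_{ℝ^d} CS⁺(t,x) CS⁺(t,y) e^{-a‖t‖²} dt = (π/a)^{d/2} e^{-‖x-y‖²/(4a)}`. -/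
theorem integral_CSplus_mul_CSplus_gaussian (d : ℕ) (hd : 1 ≤ d) (a : ℝ) (ha : 0 < a)
    (x y : EuclideanSpace ℝ (Fin d)) :
    ∫ t : EuclideanSpace ℝ (Fin d), CSplus t x * CSplus t y * Real.exp (-a * ‖t‖ ^ 2)
      = (π / a) ^ ((d : ℝ) / 2) * Real.exp (-‖x - y‖ ^ 2 / (4 * a)) := by
  have hre : (0:ℝ) < (a : ℂ).re := by simpa using ha
  have hint1 : Integrable (fun t : EuclideanSpace ℝ (Fin d) ↦
      Real.cos (inner ℝ (x - y) t : ℝ) * Real.exp (-a * ‖t‖ ^ 2)) := by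
    have := (GaussianFourier.integrable_cexp_neg_mul_sq_norm_add
      (V := EuclideanSpace ℝ (Fin d)) hre Complex.I (x - y)).re
    apply this.congr
    filter_upwards with t
    rw [RCLike.re_to_complex, gaussian_re]
  have hint2 : Integrable (fun t : EuclideanSpace ℝ (Fin d) ↦
      Real.sin (inner ℝ (x + y) t : ℝ) * Real.exp (-a * ‖t‖ ^ 2)) := by
    have := (GaussianFourier.integrable_cexp_neg_mul_sq_norm_add
      (V := EuclideanSpace ℝ (Fin d)) hre Complex.I (x + y)).im
    apply this.congr
    filter_upwards with t
    rw [RCLike.im_to_complex, gaussian_im]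
  have heq : ∀ t : EuclideanSpace ℝ (Fin d),
      CSplus t x * CSplus t y * Real.exp (-a * ‖t‖ ^ 2)
        = Real.cos (inner ℝ (x - y) t : ℝ) * Real.exp (-a * ‖t‖ ^ 2)
          + Real.sin (inner ℝ (x + y) t : ℝ) * Real.exp (-a * ‖t‖ ^ 2) := by
    intro t
    have h1 : (inner ℝ (x - y) t : ℝ) = (inner ℝ t x : ℝ) - (inner ℝ t y : ℝ) := by
      rw [real_inner_comm]; exact inner_sub_right _ _ _
    have h2 : (inner ℝ (x + y) t : ℝ) = (inner ℝ t x : ℝ) + (inner ℝ t y : ℝ) := by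
      rw [real_inner_comm]; exact inner_add_right _ _ _
    rw [h1, h2, CSplus, CSplus, Real.cos_sub, Real.sin_add]
    ring
  rw [show (∫ t : EuclideanSpace ℝ (Fin d),
      CSplus t x * CSplus t y * Real.exp (-a * ‖t‖ ^ 2))
      = ∫ t : EuclideanSpace ℝ (Fin d),
        (Real.cos (inner ℝ (x - y) t : ℝ) * Real.exp (-a * ‖t‖ ^ 2)
          + Real.sin (inner ℝ (x + y) t : ℝ) * Real.exp (-a * ‖t‖ ^ 2)) from
    integral_congr_ae (Filter.Eventually.of_forall heq)]
  rw [integral_add hint1 hint2, (gaussian_key d a ha (x - y)).1,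
    (gaussian_key d a ha (x + y)).2, add_zero]
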